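/- Let A be a unital C*-algebra and let T : A → A be a bounded local triple derivation with T(1) = 0. Then T is a symmetric operator, that is, T(a*) = T(a)* for every a ∈ A. -/

import Mathlib

/-- The triple product `{a,b,c} = ½(a b* c + c b* a)` on a C*-algebra. -/
noncomputable def tripleProd {A : Type*} [NonUnitalRing A] [StarRing A] [Module ℂ A]
    (a b c : A) : A :=
  (2 : ℂ)⁻¹ • (a * star b * c + c * star b * a)

/-- A bounded local triple derivation `T` on a unital C*-algebra with `T(1) = 0`
is a symmetric operator: `T(a*) = T(a)*` for every `a`. -/

lemma myHalfSum {A : Type*} [AddCommGroup A] [Module ℂ A] (a : A) :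
    (2 : ℂ)⁻¹ • (a + a) = a := by
  rw [← two_smul ℂ a, smul_smul, inv_mul_cancel₀ (two_ne_zero), one_smul]

section

variable {A : Type*} [CStarAlgebra A] (T : A →L[ℂ] A)

lemma unitary_rel
    (hloc : ∀ a : A, ∃ δ : A →ₗ[ℂ] A,
      (∀ x y z : A,
        δ (tripleProd x y z) = tripleProd (δ x) y z + tripleProd x (δ y) z + tripleProd x y (δ z)) ∧
      T a = δ a)
    (u : A) (hu1 : u * star u = 1) (hu2 : star u * u = 1) :
    star (T u) + star u * T u * star u = 0 := by
  obtain ⟨δ, hδ, hTu⟩ := hloc u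
  have e := hδ u u u
  set d := δ u with hd
  have h3 : ∀ v : A, v * star u * u = v := fun v => by rw [mul_assoc, hu2, mul_one]
  have h4 : ∀ v : A, u * star u * v = v := fun v => by rw [hu1, one_mul]
  simp only [tripleProd, h3, h4] at e
  rw [map_smul, map_add, ← hd, myHalfSum, myHalfSum] at e
  -- e : d = d + u * star d * u + d
  have hw : u * star d * u = -d := by
    have := e
    linear_combination (norm := abel_nf) -this
  have : star u * (u * star d * u) * star u = star d := by
    rw [← mul_assoc, ← mul_assoc, hu2, one_mul, mul_assoc, hu1, mul_one]
  rw [hw] at this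
  rw [hTu]
  rw [← this]
  noncomm_ring

end

section

variable {A : Type*} [CStarAlgebra A] (T : A →L[ℂ] A)

lemma skew_part
    (hloc : ∀ a : A, ∃ δ : A →ₗ[ℂ] A,
      (∀ x y z : A,
        δ (tripleProd x y z) = tripleProd (δ x) y z + tripleProd x (δ y) z + tripleProd x y (δ z)) ∧
      T a = δ a)
    (h1 : T 1 = 0) (x : A) (hx : star x = -x) :
    star (T x) + T x = 0 := by
  set u : ℝ → A := fun t => NormedSpace.exp (t • x) with hu_def
  have hstar : ∀ t : ℝ, star (u t) = NormedSpace.exp (t • (-x)) := by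
    intro t
    rw [hu_def, NormedSpace.star_exp, star_smul, star_trivial, hx]
  have hcomm : ∀ t : ℝ, Commute (t • x) (-(t • x)) := fun t => (Commute.refl _).neg_right
  have hu1 : ∀ t : ℝ, u t * star (u t) = 1 := by
    intro t
    rw [hstar, smul_neg, ← NormedSpace.exp_add_of_commute_of_mem_ball (𝕂 := ℝ) (hcomm t)
        ((NormedSpace.expSeries_radius_eq_top ℝ A).symm ▸ edist_lt_top _ _)
        ((NormedSpace.expSeries_radius_eq_top ℝ A).symm ▸ edist_lt_top _ _), add_neg_cancel,
      NormedSpace.exp_zero]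
  have hu2 : ∀ t : ℝ, star (u t) * u t = 1 := by
    intro t
    rw [hstar, smul_neg, ← NormedSpace.exp_add_of_commute_of_mem_ball (𝕂 := ℝ) ((hcomm t).symm)
        ((NormedSpace.expSeries_radius_eq_top ℝ A).symm ▸ edist_lt_top _ _)
        ((NormedSpace.expSeries_radius_eq_top ℝ A).symm ▸ edist_lt_top _ _), neg_add_cancel,
      NormedSpace.exp_zero]
  have hf : ∀ t : ℝ, star (T (u t)) + star (u t) * T (u t) * star (u t) = 0 := fun t =>
    unitary_rel T hloc (u t) (hu1 t) (hu2 t)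
  have hu0 : u 0 = 1 := by simp [hu_def, NormedSpace.exp_zero]
  have hTu0 : T (u 0) = 0 := by rw [hu0, h1]
  -- derivatives at 0
  have hder_u : HasDerivAt u x 0 := by
    have := hasDerivAt_exp_smul_const' (𝕂 := ℝ) x (0 : ℝ)
    simpa [hu_def, NormedSpace.exp_zero] using this
  have hder_Tu : HasDerivAt (fun t => T (u t)) (T x) 0 :=
    (T.restrictScalars ℝ).hasFDerivAt.comp_hasDerivAt 0 hder_u
  have hder_v : HasDerivAt (fun t => star (u t)) (-x) 0 := by
    have := hasDerivAt_exp_smul_const' (𝕂 := ℝ) (-x) (0 : ℝ)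
    have h2 : (fun t : ℝ => star (u t)) = fun t : ℝ => NormedSpace.exp (t • (-x)) :=
      funext hstar
    rw [h2]
    simpa [NormedSpace.exp_zero] using this
  have hder_f : HasDerivAt
      (fun t => star (T (u t)) + star (u t) * T (u t) * star (u t))
      (star (T x) + (((-x) * T (u 0) + star (u 0) * T x) * star (u 0)
        + star (u 0) * T (u 0) * (-x))) 0 :=
    hder_Tu.star.add (((hder_v.mul hder_Tu)).mul hder_v)
  have hzero : HasDerivAt (fun t => star (T (u t)) + star (u t) * T (u t) * star (u t))
      (0 : A) 0 := by
    have : (fun t : ℝ => star (T (u t)) + star (u t) * T (u t) * star (u t))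
        = fun _ : ℝ => (0 : A) := funext hf
    rw [this]
    exact hasDerivAt_const 0 0
  have := hder_f.unique hzero
  rw [hTu0, hu0] at this
  simpa using this

end

theorem local_triple_derivation_symmetric
    {A : Type*} [CStarAlgebra A] (T : A →L[ℂ] A)
    (hloc : ∀ a : A, ∃ δ : A →ₗ[ℂ] A,
      (∀ x y z : A,
        δ (tripleProd x y z) = tripleProd (δ x) y z + tripleProd x (δ y) z + tripleProd x y (δ z)) ∧
      T a = δ a)
    (h1 : T 1 = 0) :
    ∀ a : A, T (star a) = star (T a) := by
  intro a
  have E1 : star (T (a - star a)) + T (a - star a) = 0 :=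
    skew_part T hloc h1 _ (by rw [star_sub, star_star]; abel)
  have E2 : star (T (Complex.I • (a + star a))) + T (Complex.I • (a + star a)) = 0 :=
    skew_part T hloc h1 _ (by
      rw [star_smul, star_add, star_star, Complex.star_def, Complex.conj_I, neg_smul, add_comm])
  rw [map_sub, star_sub] at E1
  rw [map_smul, star_smul, Complex.star_def, Complex.conj_I, map_add, star_add, neg_smul] at E2
  -- E2 : -(I • (star (T a) + star (T (star a)))) + I • (T a + T (star a)) = 0
  have E2' : star (T (star a)) + star (T a) + (-T a + -T (star a)) = 0 := by
    have := congrArg (fun z => Complex.I • z) E2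
    simpa [smul_add, smul_smul, Complex.I_mul_I, neg_smul, neg_neg] using this
  have key : star (T a) + star (T a) = T (star a) + T (star a) := by
    have h3 := congrArg₂ (· + ·) E1 E2'
    simp only [add_zero] at h3
    have h2 : star (T a) - star (T (star a)) + (T a - T (star a))
        + (star (T (star a)) + star (T a) + (-T a + -T (star a)))
        = (star (T a) + star (T a)) - (T (star a) + T (star a)) := by abel
    rw [h2] at h3
    exact (sub_eq_zero.mp h3)
  have h4 : (2 : ℂ) • star (T a) = (2 : ℂ) • T (star a) := by
    rw [two_smul, two_smul]; exact key
  exact (smul_right_injective A two_ne_zero h4).symm
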